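/- If a word W contains n pairwise non-overlapping occurrences of the same subword u of length n·d, then W is either n-divisible or contains a subword of the form v^d for some nonempty word v. -/

import Mathlib

variable {α : Type*} [LinearOrder α]

/-- `u` repeated `d` times. -/
def wpow (u : List α) (d : ℕ) : List α := (List.replicate d u).flatten

/-- A word `W` is `n`-divisible if `W = v ++ u₁ ++ ⋯ ++ uₙ` with the nonempty
words `u₁ ≻ u₂ ≻ ⋯ ≻ uₙ` strictly decreasing in the lexicographic order. -/
def NDivisible (n : ℕ) (W : List α) : Prop :=
  ∃ (v : List α) (u : Fin n → List α), (∀ i, u i ≠ []) ∧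
    W = v ++ (List.ofFn u).flatten ∧
    ∀ i j : Fin n, i < j → List.Lex (· < ·) (u j) (u i)

/-- If a list has its `k`-shifted version as a prefix, then it starts with
`d` copies of its first `k` letters, as long as it is long enough. -/
lemma wpow_prefix : ∀ (d k : ℕ) (y : List α), 0 < k → y.drop k <+: y →
    d * k ≤ y.length → wpow (y.take k) d <+: y := by
  intro d
  induction d with
  | zero => intro k y _ _ _; simp [wpow]
  | succ d ih =>
    intro k y hk hpre hlen
    have h1 : wpow (y.take k) (d+1) = y.take k ++ wpow (y.take k) d := by
      simp [wpow, List.replicate_succ]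
    rw [h1]
    cases d with
    | zero =>
      simpa [wpow] using List.take_prefix k y
    | succ d =>
      have hky : 2 * k ≤ y.length := by nlinarith
      have htake : (y.drop k).take k = y.take k := by
        refine (hpre.take k).eq_of_length ?_
        simp [List.length_take, List.length_drop]
        omega
      have hrec : wpow ((y.drop k).take k) (d+1) <+: y.drop k := by
        refine ih k (y.drop k) hk (by simpa using hpre.drop k) ?_
        have hmul : (d+1+1)*k = (d+1)*k + k := by ring
        simp only [List.length_drop]
        omega
      rw [htake] at hrec
      obtain ⟨r, hr⟩ := hrec
      exact ⟨r, by rw [List.append_assoc, hr, List.take_append_drop]⟩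

/-- A strict lexicographic comparison witnessed before a prefix ends
survives arbitrary extensions of the two words. -/
lemma lex_lift : ∀ {a b a' b' : List α}, List.Lex (· < ·) a b → ¬ a <+: b →
    a <+: a' → b <+: b' → List.Lex (· < ·) a' b' := by
  intro a b a' b' hlex
  induction hlex generalizing a' b' with
  | nil => intro hnp _ _; exact absurd (List.nil_prefix) hnp
  | @rel x as y bs hxy =>
    intro _ ha hb
    obtain ⟨r, rfl⟩ := ha
    obtain ⟨s, rfl⟩ := hb
    exact List.Lex.rel hxy
  | @cons x as bs _ ih =>
    intro hnp ha hb
    obtain ⟨r, rfl⟩ := ha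
    obtain ⟨s, rfl⟩ := hb
    refine List.Lex.cons (ih ?_ ⟨r, rfl⟩ ⟨s, rfl⟩)
    intro h
    exact hnp (List.cons_prefix_cons.mpr ⟨rfl, h⟩)

/-- Telescoping a list into consecutive segments. -/
lemma join_ofFn_eq (W : List α) : ∀ (n : ℕ) (c : ℕ → ℕ), (∀ m, c m ≤ c (m+1)) →
    (List.ofFn (fun i : Fin n => (W.drop (c (i : ℕ))).take (c ((i : ℕ)+1) - c (i : ℕ)))).flatten
      = (W.drop (c 0)).take (c n - c 0) := by
  intro n
  induction n with
  | zero => intro c _; simp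
  | succ n ih =>
    intro c hc
    have hmono : Monotone c := monotone_nat_of_le_succ hc
    rw [List.ofFn_succ]
    have htail := ih (fun m => c (m+1)) (fun m => hc (m+1))
    simp only [Fin.val_succ, Fin.val_zero, Nat.zero_add] at htail ⊢
    have hjc : ∀ (a : List α) (L : List (List α)), (a :: L).flatten = a ++ L.flatten :=
      fun _ _ => rfl
    rw [hjc, htail]
    have h01 : c 0 ≤ c 1 := hc 0
    have h1n : c 1 ≤ c (n+1) := hmono (by omega)
    have hdd : W.drop (c 1) = (W.drop (c 0)).drop (c 1 - c 0) := by
      rw [List.drop_drop]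
      congr 1
      omega
    rw [hdd, ← List.take_add]
    congr 1
    omega

/-- If `W` contains `n` pairwise non-overlapping occurrences of the same subword `u`
of length `n * d`, then `W` is `n`-divisible or contains a subword `v ^ d`. -/
theorem stmt2 (W u : List α) (n d : ℕ) (hn : 1 ≤ n) (hd : 1 ≤ d)
    (hu : u.length = n * d) (pos : Fin n → ℕ)
    (hin : ∀ i, pos i + u.length ≤ W.length)
    (hocc : ∀ i, (W.drop (pos i)).take u.length = u)
    (hdisj : ∀ i j : Fin n, i < j → pos i + u.length ≤ pos j) :
    NDivisible n W ∨ ∃ v : List α, v ≠ [] ∧ wpow v d <:+: W := by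
  have hnN : n ≤ u.length := by
    rw [hu]; nlinarith
  have huW : u <:+: W := by
    have h0 := hocc ⟨0, hn⟩
    rw [← h0]
    exact (List.take_prefix _ _).isInfix.trans (List.drop_suffix _ _).isInfix
  by_cases hA : ∃ s t : ℕ, t < s ∧ s < n ∧ u.drop s <+: u.drop t
  · -- power case
    obtain ⟨s, t, hts, hsn, hpre⟩ := hA
    right
    obtain ⟨k, rfl⟩ := Nat.exists_eq_add_of_lt hts
    have hpre' : (u.drop t).drop (k+1) <+: u.drop t := by
      rw [List.drop_drop]
      exact hpre
    have hkey : d * (k+1) + t ≤ n * d := by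
      have h1 : (t + k + 1 + 1) * d ≤ n * d := Nat.mul_le_mul_right d (by omega)
      nlinarith
    have hdk1 : 1 ≤ d * (k+1) := Nat.one_le_iff_ne_zero.mpr (by positivity)
    have hlen : d * (k+1) ≤ (u.drop t).length := by
      rw [List.length_drop, hu]
      omega
    have hpow := wpow_prefix d (k+1) (u.drop t) (by omega) hpre' hlen
    refine ⟨(u.drop t).take (k+1), ?_, ?_⟩
    · have hylen : 1 ≤ (u.drop t).length := by
        rw [List.length_drop, hu]
        omega
      intro hnil
      have := congrArg List.length hnil
      simp only [List.length_take, List.length_nil] at this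
      omega
    · exact hpow.isInfix.trans ((List.drop_suffix t u).isInfix.trans huW)
  · -- n-divisible case
    push_neg at hA
    left
    set f : Fin n → List α := fun j => u.drop (j : ℕ) with hf
    have hfinj : Function.Injective f := by
      intro a b hab
      have h := congrArg List.length hab
      simp only [hf, List.length_drop] at h
      have ha := a.isLt
      have hb := b.isLt
      exact Fin.ext (by omega)
    set σ := Tuple.sort f with hσ
    have hsm : StrictMono (f ∘ σ) :=
      (Tuple.monotone_sort f).strictMono_of_injective (hfinj.comp σ.injective)
    set s' : Fin n → ℕ := fun i => ((σ i.rev : Fin n) : ℕ) with hs'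
    set Q : Fin n → List α := fun i => u.drop (s' i) with hQ
    have hsn : ∀ i : Fin n, s' i < n := fun i => (σ i.rev).isLt
    have hQlt : ∀ i j : Fin n, i < j → List.Lex (· < ·) (Q j) (Q i) := by
      intro i j hij
      exact hsm (Fin.rev_lt_rev.mpr hij)
    have hQnp : ∀ i j : Fin n, i ≠ j → ¬ Q j <+: Q i := by
      intro i j hij hp
      rcases lt_trichotomy (s' j) (s' i) with h | h | h
      · have := hp.length_le
        simp only [hQ, List.length_drop] at this
        have := hsn i
        omega
      · exact hij (Fin.rev_injective (σ.injective (Fin.ext h.symm)))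
      · exact hA (s' j) (s' i) h (hsn j) hp
    set c : ℕ → ℕ := fun m => if h : m < n then pos ⟨m, h⟩ + s' ⟨m, h⟩ else W.length
      with hc
    have hcW : ∀ i : Fin n, c (i : ℕ) = pos i + s' i := by
      intro i
      simp [hc, i.isLt]
    have hciW : ∀ i : Fin n, c (i : ℕ) + (u.length - s' i) ≤ W.length := by
      intro i
      have := hin i
      have := hsn i
      rw [hcW i]
      omega
    have hstar : ∀ i : Fin n, c (i : ℕ) + (u.length - s' i) ≤ c ((i : ℕ) + 1) := by
      intro i
      by_cases h : (i : ℕ) + 1 < n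
      · have hd2 := hdisj i ⟨(i : ℕ) + 1, h⟩ (by simp [Fin.lt_def])
        have h1 := hsn i
        rw [hcW i]
        simp only [hc, dif_pos h]
        omega
      · have h1 := hciW i
        have h2 : c ((i : ℕ) + 1) = W.length := by
          simp [hc, h]
        omega
    have hcmono : ∀ m, c m ≤ c (m+1) := by
      intro m
      by_cases hm : m < n
      · have := hstar ⟨m, hm⟩
        simp only at this
        omega
      · have hm1 : ¬ (m + 1 < n) := by omega
        simp [hc, dif_neg hm, dif_neg hm1]
    have hclast : c n = W.length := by simp [hc]
    -- the factors
    set u' : Fin n → List α :=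
      fun i => (W.drop (c (i : ℕ))).take (c ((i : ℕ)+1) - c (i : ℕ)) with hu'
    have hQpre : ∀ i : Fin n, Q i <+: u' i := by
      intro i
      have h1 : Q i = (W.drop (c (i : ℕ))).take (u.length - s' i) := by
        rw [hQ]
        simp only
        conv_lhs => rw [← hocc i]
        rw [List.drop_take, List.drop_drop, ← hcW i]
      rw [h1, hu']
      refine List.take_prefix_take_left ?_
      have := hstar i
      omega
    refine ⟨W.take (c 0), u', ?_, ?_, ?_⟩
    · intro i hnil
      have h0 := hQpre i
      rw [hnil, List.prefix_nil] at h0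
      have h1 := congrArg List.length h0
      simp only [hQ, List.length_drop, List.length_nil] at h1
      have h2 := hsn i
      omega
    · rw [hu', join_ofFn_eq W n c hcmono, hclast]
      have : (W.drop (c 0)).length ≤ W.length - c 0 := by
        simp [List.length_drop]
      rw [List.take_of_length_le this, List.take_append_drop]
    · intro i j hij
      exact lex_lift (hQlt i j hij) (hQnp i j hij.ne) (hQpre j) (hQpre i)
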